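/- Let n ≥ 2, let λ, ν ∈ ℂ with ν − λ a nonnegative integer, and let I ⊆ {1, …, n−1} with #I = i. Then (x_n² − Σ_{k=1}^{n−1} ε_I(k) x_k²)·𝒦_{λ−1,ν+1} = 4(ν − i)·𝒦_{λ,ν} − 8 (Σ_{k ∈ I} ∂_k²) 𝒦_{λ+1,ν−1} as tempered distributions on ℝ^n. -/

import Mathlib

noncomputable def pd {n : ℕ} (p : Fin n) (f : (Fin n → ℝ) → ℂ) : (Fin n → ℝ) → ℂ :=
  fun x => fderiv ℝ f x (Pi.single p 1)

noncomputable def lapP {n : ℕ} (f : (Fin n → ℝ) → ℂ) : (Fin n → ℝ) → ℂ :=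
  fun x => ∑ j ∈ Finset.univ.filter (fun j : Fin n => (j : ℕ) < n - 1), pd j (pd j f) x

noncomputable def pdLast {n : ℕ} (f : (Fin n → ℝ) → ℂ) : (Fin n → ℝ) → ℂ :=
  if h : 0 < n then pd ⟨n - 1, by omega⟩ f else 0

abbrev Sm {n : ℕ} (f : (Fin n → ℝ) → ℂ) : Prop := ContDiff ℝ ((⊤:ℕ∞) : WithTop ℕ∞) f

variable {n : ℕ}

lemma Sm.dAt {f : (Fin n → ℝ) → ℂ} (hf : Sm f) (x : Fin n → ℝ) : DifferentiableAt ℝ f x :=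
  (hf.differentiable (by simp)) x

lemma Sm.pd {f : (Fin n → ℝ) → ℂ} (hf : Sm f) (p : Fin n) : Sm (pd p f) := by
  have h1 : ContDiff ℝ ((⊤:ℕ∞) : WithTop ℕ∞) (fderiv ℝ f) :=
    hf.fderiv_right (by simp)
  exact (ContinuousLinearMap.apply ℝ ℂ (Pi.single p 1 : Fin n → ℝ)).contDiff.comp h1

lemma pd_add {f g : (Fin n → ℝ) → ℂ} (hf : Sm f) (hg : Sm g) (p : Fin n) :
    pd p (fun x => f x + g x) = fun x => pd p f x + pd p g x := by
  funext x
  simp only [pd, fderiv_fun_add (hf.dAt x) (hg.dAt x), ContinuousLinearMap.add_apply]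

lemma pd_const_mul {f : (Fin n → ℝ) → ℂ} (hf : Sm f) (c : ℂ) (p : Fin n) :
    pd p (fun x => c * f x) = fun x => c * pd p f x := by
  funext x
  simp only [pd, fderiv_const_mul (hf.dAt x) c, ContinuousLinearMap.smul_apply, smul_eq_mul]

lemma pd_mul {f g : (Fin n → ℝ) → ℂ} (hf : Sm f) (hg : Sm g) (p : Fin n) :
    pd p (fun x => g x * f x) = fun x => pd p g x * f x + g x * pd p f x := by
  funext x
  simp only [pd, fderiv_fun_mul (hg.dAt x) (hf.dAt x), ContinuousLinearMap.add_apply,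
    ContinuousLinearMap.smul_apply, smul_eq_mul]
  ring

noncomputable def cf {n : ℕ} (j : Fin n) : (Fin n → ℝ) → ℂ := fun x => ((x j : ℝ) : ℂ)

lemma Sm.cf (j : Fin n) : Sm (cf j) :=
  (Complex.ofRealCLM.comp (ContinuousLinearMap.proj j :
    (Fin n → ℝ) →L[ℝ] ℝ)).contDiff

lemma pd_cf (p j : Fin n) : pd p (cf (n := n) j) = fun _ => if p = j then 1 else 0 := by
  funext x
  have : (cf (n := n) j) = (Complex.ofRealCLM.comp (ContinuousLinearMap.proj j :
      (Fin n → ℝ) →L[ℝ] ℝ)) := rfl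
  simp only [pd, this, ContinuousLinearMap.fderiv, ContinuousLinearMap.comp_apply,
    ContinuousLinearMap.proj_apply, Complex.ofRealCLM_apply]
  rw [Pi.single_apply]
  rcases eq_or_ne p j with h|h
  · subst h; simp
  · rw [if_neg (fun hh => h hh.symm), if_neg h, Complex.ofReal_zero]

lemma pd_comm {f : (Fin n → ℝ) → ℂ} (hf : Sm f) (p q : Fin n) :
    pd p (pd q f) = pd q (pd p f) := by
  funext x
  have hfd : DifferentiableAt ℝ (fderiv ℝ f) x :=
    ((hf.fderiv_right (m := ((⊤:ℕ∞) : WithTop ℕ∞)) (by simp)).differentiable (by simp)) x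
  have key : ∀ a b : Fin n, pd a (pd b f) x =
      fderiv ℝ (fderiv ℝ f) x (Pi.single a 1) (Pi.single b 1) := by
    intro a b
    have h2 : pd b f = fun y => (fderiv ℝ f y) (Pi.single b 1) := rfl
    rw [pd, h2, fderiv_clm_apply hfd (differentiableAt_const _)]
    simp only [fderiv_fun_const, Pi.zero_apply, ContinuousLinearMap.add_apply,
      ContinuousLinearMap.comp_apply, ContinuousLinearMap.zero_apply, map_zero,
      ContinuousLinearMap.flip_apply, zero_add]
  rw [key p q, key q p]
  exact (hf.contDiffAt.isSymmSndFDerivAt (by rw [minSmoothness_of_isRCLikeNormedField]; exact WithTop.coe_le_coe.mpr le_top)) _ _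

lemma sm_add {f g : (Fin n → ℝ) → ℂ} (hf : Sm f) (hg : Sm g) :
    Sm (fun x => f x + g x) := ContDiff.add hf hg

lemma sm_constMul {f : (Fin n → ℝ) → ℂ} (hf : Sm f) (c : ℂ) :
    Sm (fun x => c * f x) := (contDiff_const (c := c)).mul hf

lemma sm_mul {f g : (Fin n → ℝ) → ℂ} (hf : Sm f) (hg : Sm g) :
    Sm (fun x => f x * g x) := ContDiff.mul hf hg

lemma sm_lapP {f : (Fin n → ℝ) → ℂ} (hf : Sm f) : Sm (lapP f) :=
  ContDiff.sum fun j _ => (hf.pd j).pd j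

lemma sm_lapPIter {f : (Fin n → ℝ) → ℂ} (hf : Sm f) (k : ℕ) : Sm (lapP^[k] f) := by
  induction k with
  | zero => exact hf
  | succ k ih => rw [Function.iterate_succ_apply']; exact sm_lapP ih

lemma pdLast_eq (hn : 0 < n) (f : (Fin n → ℝ) → ℂ) :
    pdLast f = pd ⟨n - 1, by omega⟩ f := by
  rw [pdLast, dif_pos hn]

lemma sm_pdLast {f : (Fin n → ℝ) → ℂ} (hf : Sm f) : Sm (pdLast f) := by
  by_cases hn : 0 < n
  · rw [pdLast_eq hn]; exact hf.pd _
  · rw [pdLast, dif_neg hn]; exact contDiff_const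

lemma sm_pdLastIter {f : (Fin n → ℝ) → ℂ} (hf : Sm f) (m : ℕ) : Sm (pdLast^[m] f) := by
  induction m with
  | zero => exact hf
  | succ m ih => rw [Function.iterate_succ_apply']; exact sm_pdLast ih

lemma pd_sub {f g : (Fin n → ℝ) → ℂ} (hf : Sm f) (hg : Sm g) (p : Fin n) :
    pd p (fun x => f x - g x) = fun x => pd p f x - pd p g x := by
  funext x
  simp only [pd, fderiv_fun_sub (hf.dAt x) (hg.dAt x), ContinuousLinearMap.sub_apply]

lemma pd_sum {ι : Type*} (s : Finset ι) {F : ι → (Fin n → ℝ) → ℂ}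
    (hF : ∀ j ∈ s, Sm (F j)) (p : Fin n) :
    pd p (fun x => ∑ j ∈ s, F j x) = fun x => ∑ j ∈ s, pd p (F j) x := by
  funext x
  simp only [pd]
  rw [fderiv_fun_sum (fun j hj => (hF j hj).dAt x)]
  simp [ContinuousLinearMap.sum_apply]

lemma sm_sum {ι : Type*} (s : Finset ι) {F : ι → (Fin n → ℝ) → ℂ}
    (hF : ∀ j ∈ s, Sm (F j)) : Sm (fun x => ∑ j ∈ s, F j x) :=
  ContDiff.sum hF

lemma lapP_add {f g : (Fin n → ℝ) → ℂ} (hf : Sm f) (hg : Sm g) :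
    lapP (fun x => f x + g x) = fun x => lapP f x + lapP g x := by
  funext x
  simp only [lapP]
  rw [← Finset.sum_add_distrib]
  apply Finset.sum_congr rfl
  intro j _
  rw [pd_add hf hg j, pd_add (hf.pd j) (hg.pd j) j]

lemma lapP_sub {f g : (Fin n → ℝ) → ℂ} (hf : Sm f) (hg : Sm g) :
    lapP (fun x => f x - g x) = fun x => lapP f x - lapP g x := by
  funext x
  simp only [lapP]
  rw [← Finset.sum_sub_distrib]
  apply Finset.sum_congr rfl
  intro j _
  rw [pd_sub hf hg j, pd_sub (hf.pd j) (hg.pd j) j]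

lemma lapP_const_mul {f : (Fin n → ℝ) → ℂ} (hf : Sm f) (c : ℂ) :
    lapP (fun x => c * f x) = fun x => c * lapP f x := by
  funext x
  simp only [lapP]
  rw [Finset.mul_sum]
  apply Finset.sum_congr rfl
  intro j _
  rw [pd_const_mul hf c j, pd_const_mul (hf.pd j) c j]

lemma lapP_sum {ι : Type*} (s : Finset ι) {F : ι → (Fin n → ℝ) → ℂ}
    (hF : ∀ j ∈ s, Sm (F j)) :
    lapP (fun x => ∑ j ∈ s, F j x) = fun x => ∑ j ∈ s, lapP (F j) x := by
  funext x
  simp only [lapP]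
  rw [Finset.sum_comm]
  apply Finset.sum_congr rfl
  intro j hj
  rw [pd_sum s hF j, pd_sum s (fun i hi => (hF i hi).pd j) j]

lemma pd_lapP {f : (Fin n → ℝ) → ℂ} (hf : Sm f) (p : Fin n) :
    pd p (lapP f) = lapP (pd p f) := by
  have h : lapP f = fun x => ∑ j ∈ Finset.univ.filter (fun j : Fin n => (j : ℕ) < n - 1),
      pd j (pd j f) x := rfl
  rw [h, pd_sum _ (fun j _ => (hf.pd j).pd j) p]
  funext x
  simp only [lapP]
  apply Finset.sum_congr rfl
  intro j _
  rw [pd_comm (hf.pd j) p j, pd_comm hf p j, pd_comm (hf.pd p) j j]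

lemma lapPIter_const_mul {f : (Fin n → ℝ) → ℂ} (hf : Sm f) (c : ℂ) (k : ℕ) :
    lapP^[k] (fun x => c * f x) = fun x => c * lapP^[k] f x := by
  induction k with
  | zero => rfl
  | succ k ih =>
      rw [Function.iterate_succ_apply', Function.iterate_succ_apply', ih,
        lapP_const_mul (sm_lapPIter hf k) c]

lemma lapPIter_add {f g : (Fin n → ℝ) → ℂ} (hf : Sm f) (hg : Sm g) (k : ℕ) :
    lapP^[k] (fun x => f x + g x) = fun x => lapP^[k] f x + lapP^[k] g x := by
  induction k with
  | zero => rfl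
  | succ k ih =>
      rw [Function.iterate_succ_apply', Function.iterate_succ_apply',
        Function.iterate_succ_apply', ih, lapP_add (sm_lapPIter hf k) (sm_lapPIter hg k)]

lemma lapPIter_sub {f g : (Fin n → ℝ) → ℂ} (hf : Sm f) (hg : Sm g) (k : ℕ) :
    lapP^[k] (fun x => f x - g x) = fun x => lapP^[k] f x - lapP^[k] g x := by
  induction k with
  | zero => rfl
  | succ k ih =>
      rw [Function.iterate_succ_apply', Function.iterate_succ_apply',
        Function.iterate_succ_apply', ih, lapP_sub (sm_lapPIter hf k) (sm_lapPIter hg k)]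

lemma lapPIter_sum {ι : Type*} (s : Finset ι) {F : ι → (Fin n → ℝ) → ℂ}
    (hF : ∀ j ∈ s, Sm (F j)) (k : ℕ) :
    lapP^[k] (fun x => ∑ j ∈ s, F j x) = fun x => ∑ j ∈ s, lapP^[k] (F j) x := by
  induction k with
  | zero => rfl
  | succ k ih =>
      rw [Function.iterate_succ_apply', ih, lapP_sum s (fun j hj => sm_lapPIter (hF j hj) k)]
      funext x
      apply Finset.sum_congr rfl
      intro j _
      rw [Function.iterate_succ_apply']

lemma pdLastIter_const_mul {f : (Fin n → ℝ) → ℂ} (hf : Sm f) (c : ℂ) (m : ℕ) :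
    pdLast^[m] (fun x => c * f x) = fun x => c * pdLast^[m] f x := by
  induction m with
  | zero => rfl
  | succ m ih =>
      rw [Function.iterate_succ_apply', Function.iterate_succ_apply', ih]
      by_cases hn : 0 < n
      · rw [pdLast_eq hn, pdLast_eq hn, pd_const_mul (sm_pdLastIter hf m) c]
      · rw [pdLast, dif_neg hn, pdLast, dif_neg hn]; funext x; simp

lemma pdLastIter_add {f g : (Fin n → ℝ) → ℂ} (hf : Sm f) (hg : Sm g) (m : ℕ) :
    pdLast^[m] (fun x => f x + g x) = fun x => pdLast^[m] f x + pdLast^[m] g x := by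
  induction m with
  | zero => rfl
  | succ m ih =>
      rw [Function.iterate_succ_apply', Function.iterate_succ_apply',
        Function.iterate_succ_apply', ih]
      by_cases hn : 0 < n
      · rw [pdLast_eq hn, pdLast_eq hn, pdLast_eq hn,
          pd_add (sm_pdLastIter hf m) (sm_pdLastIter hg m)]
      · simp only [pdLast, dif_neg hn]; funext x; simp

lemma pdLastIter_sub {f g : (Fin n → ℝ) → ℂ} (hf : Sm f) (hg : Sm g) (m : ℕ) :
    pdLast^[m] (fun x => f x - g x) = fun x => pdLast^[m] f x - pdLast^[m] g x := by
  induction m with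
  | zero => rfl
  | succ m ih =>
      rw [Function.iterate_succ_apply', Function.iterate_succ_apply',
        Function.iterate_succ_apply', ih]
      by_cases hn : 0 < n
      · rw [pdLast_eq hn, pdLast_eq hn, pdLast_eq hn,
          pd_sub (sm_pdLastIter hf m) (sm_pdLastIter hg m)]
      · simp only [pdLast, dif_neg hn]; funext x; simp

lemma pdLastIter_sum {ι : Type*} (s : Finset ι) {F : ι → (Fin n → ℝ) → ℂ}
    (hF : ∀ j ∈ s, Sm (F j)) (m : ℕ) :
    pdLast^[m] (fun x => ∑ j ∈ s, F j x) = fun x => ∑ j ∈ s, pdLast^[m] (F j) x := by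
  induction m with
  | zero => rfl
  | succ m ih =>
      rw [Function.iterate_succ_apply', ih]
      have h2 : ∀ j ∈ s, pdLast^[m+1] (F j) = pdLast (pdLast^[m] (F j)) := by
        intro j _; rw [Function.iterate_succ_apply']
      by_cases hn : 0 < n
      · rw [pdLast_eq hn, pd_sum s (fun j hj => sm_pdLastIter (hF j hj) m)]
        funext x
        apply Finset.sum_congr rfl
        intro j hj
        rw [h2 j hj, pdLast_eq hn]
      · rw [pdLast, dif_neg hn]
        funext x
        rw [Pi.zero_apply]
        symm
        apply Finset.sum_eq_zero
        intro j hj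
        rw [h2 j hj, pdLast, dif_neg hn, Pi.zero_apply]

lemma pd_lapPIter {f : (Fin n → ℝ) → ℂ} (hf : Sm f) (p : Fin n) (k : ℕ) :
    pd p (lapP^[k] f) = lapP^[k] (pd p f) := by
  induction k with
  | zero => rfl
  | succ k ih =>
      rw [Function.iterate_succ_apply', Function.iterate_succ_apply',
        pd_lapP (sm_lapPIter hf k) p, ih]

lemma pd_cf_mul {f : (Fin n → ℝ) → ℂ} (hf : Sm f) (p j : Fin n) :
    pd p (fun x => cf j x * f x)
      = fun x => (if p = j then f x else 0) + cf j x * pd p f x := by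
  rw [pd_mul hf (Sm.cf j) p, pd_cf p j]
  funext x
  by_cases h : p = j <;> simp [h]

lemma pd_cf_mul_other {f : (Fin n → ℝ) → ℂ} (hf : Sm f) {p j : Fin n} (h : p ≠ j) :
    pd p (fun x => cf j x * f x) = fun x => cf j x * pd p f x := by
  rw [pd_cf_mul hf p j]
  funext x
  simp [h]

lemma pd_cf_mul_self {f : (Fin n → ℝ) → ℂ} (hf : Sm f) (j : Fin n) :
    pd j (fun x => cf j x * f x) = fun x => f x + cf j x * pd j f x := by
  rw [pd_cf_mul hf j j]
  funext x
  simp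

lemma sm_cf_mul {f : (Fin n → ℝ) → ℂ} (hf : Sm f) (j : Fin n) :
    Sm (fun x => cf j x * f x) := sm_mul (Sm.cf j) hf

lemma pdLastIter_cf_mul (hn : 0 < n) {f : (Fin n → ℝ) → ℂ} (hf : Sm f) {j : Fin n}
    (hj : (j : ℕ) < n - 1) (m : ℕ) :
    pdLast^[m] (fun x => cf j x * f x) = fun x => cf j x * pdLast^[m] f x := by
  induction m with
  | zero => rfl
  | succ m ih =>
      rw [Function.iterate_succ_apply', Function.iterate_succ_apply', ih,
        pdLast_eq hn, pdLast_eq hn,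
        pd_cf_mul_other (sm_pdLastIter hf m) (by intro h; rw [Fin.ext_iff] at h; simp at h; omega)]

lemma lapP_cf_lst_mul (hn : 0 < n) {f : (Fin n → ℝ) → ℂ} (hf : Sm f) :
    lapP (fun x => cf ⟨n - 1, by omega⟩ x * f x)
      = fun x => cf ⟨n - 1, by omega⟩ x * lapP f x := by
  funext x
  simp only [lapP]
  rw [Finset.mul_sum]
  apply Finset.sum_congr rfl
  intro p hp
  simp only [Finset.mem_filter] at hp
  have hne : p ≠ ⟨n - 1, by omega⟩ := by
    intro h; rw [Fin.ext_iff] at h; simp at h; omega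
  rw [pd_cf_mul_other hf hne, pd_cf_mul_other (hf.pd p) hne]

lemma lapPIter_cf_lst_mul (hn : 0 < n) {f : (Fin n → ℝ) → ℂ} (hf : Sm f) (k : ℕ) :
    lapP^[k] (fun x => cf ⟨n - 1, by omega⟩ x * f x)
      = fun x => cf ⟨n - 1, by omega⟩ x * lapP^[k] f x := by
  induction k with
  | zero => rfl
  | succ k ih =>
      rw [Function.iterate_succ_apply', Function.iterate_succ_apply', ih,
        lapP_cf_lst_mul hn (sm_lapPIter hf k)]

lemma lapP_cf_mul {f : (Fin n → ℝ) → ℂ} (hf : Sm f) {j : Fin n} (hj : (j : ℕ) < n - 1) :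
    lapP (fun x => cf j x * f x) = fun x => cf j x * lapP f x + 2 * pd j f x := by
  funext x
  simp only [lapP]
  have key : ∀ p ∈ Finset.univ.filter (fun p : Fin n => (p : ℕ) < n - 1),
      pd p (pd p (fun x => cf j x * f x)) x
        = cf j x * pd p (pd p f) x + (if p = j then 2 * pd j f x else 0) := by
    intro p _
    by_cases h : p = j
    · subst h
      rw [pd_cf_mul_self hf p, pd_add (hf) (sm_cf_mul (hf.pd p) p),
        pd_cf_mul_self (hf.pd p) p]
      simp only [if_pos rfl, if_true]
      ring
    · rw [pd_cf_mul_other hf h, pd_cf_mul_other (hf.pd p) h]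
      simp only [if_neg h]
      ring
  rw [Finset.sum_congr rfl key, Finset.sum_add_distrib, Finset.sum_ite_eq'
    (Finset.univ.filter (fun p : Fin n => (p : ℕ) < n - 1)) j (fun _ => 2 * pd j f x)]
  rw [Finset.mul_sum]
  simp [hj]

lemma cf_zero (j : Fin n) : cf j (0 : Fin n → ℝ) = 0 := by
  simp [cf]

lemma pdLastIter_cf_lst (hn : 0 < n) {h : (Fin n → ℝ) → ℂ} (hh : Sm h) (m : ℕ) :
    pdLast^[m+1] (fun x => cf ⟨n - 1, by omega⟩ x * h x)
      = fun x => cf ⟨n - 1, by omega⟩ x * pdLast^[m+1] h x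
          + ((m : ℂ) + 1) * pdLast^[m] h x := by
  induction m with
  | zero =>
      rw [Function.iterate_one, pdLast_eq hn, pd_cf_mul_self hh]
      funext x
      simp only [Function.iterate_zero, id_eq, pdLast_eq hn]
      ring
  | succ m ih =>
      rw [Function.iterate_succ_apply', ih, pdLast_eq hn,
        pd_add (sm_cf_mul (sm_pdLastIter hh (m+1)) _)
          (sm_constMul (sm_pdLastIter hh m) _),
        pd_cf_mul_self (sm_pdLastIter hh (m+1)),
        pd_const_mul (sm_pdLastIter hh m)]
      funext x
      rw [show pdLast^[m+1+1] h = pdLast (pdLast^[m+1] h) from Function.iterate_succ_apply' _ _ _,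
        show pdLast^[m+1] h = pdLast (pdLast^[m] h) from Function.iterate_succ_apply' _ _ _]
      simp only [pdLast_eq hn]
      push_cast
      ring

lemma pdLast_sq (hn : 0 < n) {g : (Fin n → ℝ) → ℂ} (hg : Sm g) (m : ℕ) :
    pdLast^[m+2] (fun x => cf ⟨n - 1, by omega⟩ x * (cf ⟨n - 1, by omega⟩ x * g x))
      = fun x => cf ⟨n - 1, by omega⟩ x * (cf ⟨n - 1, by omega⟩ x * pdLast^[m+2] g x)
          + (2 * ((m : ℂ) + 2)) * (cf ⟨n - 1, by omega⟩ x * pdLast^[m+1] g x)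
          + (((m : ℂ) + 2) * ((m : ℂ) + 1)) * pdLast^[m] g x := by
  rw [show m + 2 = (m + 1) + 1 from rfl,
    pdLastIter_cf_lst hn (sm_cf_mul hg _) (m+1),
    pdLastIter_cf_lst hn hg (m+1)]
  rcases m with _ | m
  · rw [pdLastIter_cf_lst hn hg 0]
    funext x
    simp only [Function.iterate_zero, id_eq]
    push_cast
    ring
  · rw [pdLastIter_cf_lst hn hg (m+1)]
    funext x
    push_cast
    ring

lemma lapPIter_cf {j : Fin n} (hj : (j : ℕ) < n - 1) {h : (Fin n → ℝ) → ℂ} (hh : Sm h)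
    (k : ℕ) :
    lapP^[k+1] (fun x => cf j x * h x)
      = fun x => cf j x * lapP^[k+1] h x + (2 * ((k : ℂ) + 1)) * pd j (lapP^[k] h) x := by
  induction k with
  | zero =>
      rw [Function.iterate_one, lapP_cf_mul hh hj]
      funext x
      simp only [Function.iterate_zero, id_eq, Function.iterate_one]
      push_cast
      ring
  | succ k ih =>
      rw [Function.iterate_succ_apply', ih,
        lapP_add (sm_cf_mul (sm_lapPIter hh (k+1)) j)
          (sm_constMul ((sm_lapPIter hh k).pd j) _),
        lapP_cf_mul (sm_lapPIter hh (k+1)) hj,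
        lapP_const_mul ((sm_lapPIter hh k).pd j)]
      funext x
      beta_reduce
      rw [← pd_lapP (sm_lapPIter hh k) j,
        show lapP (lapP^[k] h) = lapP^[k+1] h from (Function.iterate_succ_apply' _ _ _).symm,
        show lapP (lapP^[k+1] h) = lapP^[k+1+1] h from (Function.iterate_succ_apply' _ _ _).symm]
      push_cast
      ring

lemma lap_sq {j : Fin n} (hj : (j : ℕ) < n - 1) {g : (Fin n → ℝ) → ℂ} (hg : Sm g) (k : ℕ) :
    lapP^[k+2] (fun x => cf j x * (cf j x * g x))
      = fun x => cf j x * (cf j x * lapP^[k+2] g x)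
          + (4 * ((k : ℂ) + 2)) * (cf j x * pd j (lapP^[k+1] g) x)
          + (2 * ((k : ℂ) + 2)) * lapP^[k+1] g x
          + (4 * ((k : ℂ) + 2) * ((k : ℂ) + 1)) * lapP^[k] (pd j (pd j g)) x := by
  rw [show k + 2 = (k + 1) + 1 from rfl,
    lapPIter_cf hj (sm_cf_mul hg j) (k+1),
    lapPIter_cf hj hg (k+1),
    lapPIter_cf hj hg k,
    pd_add (sm_cf_mul (sm_lapPIter hg (k+1)) j) (sm_constMul ((sm_lapPIter hg k).pd j) _),
    pd_cf_mul_self (sm_lapPIter hg (k+1)),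
    pd_const_mul ((sm_lapPIter hg k).pd j)]
  funext x
  rw [show pd j (pd j (lapP^[k] g)) = lapP^[k] (pd j (pd j g)) by
    rw [pd_lapPIter hg j k, pd_lapPIter (hg.pd j) j k]]
  push_cast
  ring

lemma lap_sq_one {j : Fin n} (hj : (j : ℕ) < n - 1) {g : (Fin n → ℝ) → ℂ} (hg : Sm g) :
    lapP (fun x => cf j x * (cf j x * g x))
      = fun x => cf j x * (cf j x * lapP g x) + 4 * (cf j x * pd j g x) + 2 * g x := by
  rw [lapP_cf_mul (sm_cf_mul hg j) hj, lapP_cf_mul hg hj, pd_cf_mul_self hg]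
  funext x
  beta_reduce
  ring

lemma Beval (hn : 0 < n) {g : (Fin n → ℝ) → ℂ} (hg : Sm g) (k m : ℕ) :
    pdLast^[m] (lapP^[k] (fun x => cf ⟨n - 1, by omega⟩ x * (cf ⟨n - 1, by omega⟩ x * g x))) 0
      = ((m * (m - 1) : ℕ) : ℂ) * pdLast^[m - 2] (lapP^[k] g) 0 := by
  have h1 : lapP^[k] (fun x => cf ⟨n - 1, by omega⟩ x * (cf ⟨n - 1, by omega⟩ x * g x))
      = fun x => cf ⟨n - 1, by omega⟩ x * (cf ⟨n - 1, by omega⟩ x * lapP^[k] g x) := by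
    rw [lapPIter_cf_lst_mul hn (sm_cf_mul hg _) k, lapPIter_cf_lst_mul hn hg k]
  rw [h1]
  rcases m with _ | _ | m
  · simp [cf_zero]
  · rw [show (pdLast^[1] (fun x => cf (⟨n - 1, by omega⟩ : Fin n) x *
        (cf ⟨n - 1, by omega⟩ x * lapP^[k] g x)) : _) = pdLast^[0+1] (fun x =>
        cf ⟨n - 1, by omega⟩ x * (cf ⟨n - 1, by omega⟩ x * lapP^[k] g x)) from rfl,
      pdLastIter_cf_lst hn (sm_cf_mul (sm_lapPIter hg k) _) 0]
    simp [cf_zero]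
  · rw [pdLast_sq hn (sm_lapPIter hg k) m]
    simp only [cf_zero, zero_mul, mul_zero, zero_add, add_zero]
    push_cast
    ring

lemma Aeval (hn : 0 < n) {j : Fin n} (hj : (j : ℕ) < n - 1) {g : (Fin n → ℝ) → ℂ}
    (hg : Sm g) (k m : ℕ) :
    pdLast^[m] (lapP^[k] (fun x => cf j x * (cf j x * g x))) 0
      = ((2 * k : ℕ) : ℂ) * pdLast^[m] (lapP^[k - 1] g) 0
        + ((4 * k * (k - 1) : ℕ) : ℂ) * pdLast^[m] (lapP^[k - 2] (pd j (pd j g))) 0 := by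
  rcases k with _ | _ | k
  · simp only [Function.iterate_zero, id_eq]
    rw [pdLastIter_cf_mul hn (sm_cf_mul hg j) hj m]
    simp [cf_zero]
  · rw [Function.iterate_one, lap_sq_one hj hg,
      pdLastIter_add (sm_add (sm_cf_mul (sm_mul (Sm.cf j) (sm_lapP hg)) j)
        (sm_constMul (sm_cf_mul (hg.pd j) j) 4)) (sm_constMul hg 2) m,
      pdLastIter_add (sm_cf_mul (sm_mul (Sm.cf j) (sm_lapP hg)) j)
        (sm_constMul (sm_cf_mul (hg.pd j) j) 4) m,
      pdLastIter_cf_mul hn (sm_mul (Sm.cf j) (sm_lapP hg)) hj m,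
      pdLastIter_const_mul (sm_cf_mul (hg.pd j) j) 4 m,
      pdLastIter_cf_mul hn (hg.pd j) hj m,
      pdLastIter_const_mul hg 2 m]
    simp [cf_zero]
  · rw [lap_sq hj hg k,
      pdLastIter_add (sm_add (sm_add (sm_cf_mul (sm_mul (Sm.cf j) (sm_lapPIter hg (k+2))) j)
          (sm_constMul (sm_cf_mul ((sm_lapPIter hg (k+1)).pd j) j) _))
          (sm_constMul (sm_lapPIter hg (k+1)) _))
        (sm_constMul (sm_lapPIter (Sm.pd (hg.pd j) j) k) _) m,
      pdLastIter_add (sm_add (sm_cf_mul (sm_mul (Sm.cf j) (sm_lapPIter hg (k+2))) j)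
          (sm_constMul (sm_cf_mul ((sm_lapPIter hg (k+1)).pd j) j) _))
        (sm_constMul (sm_lapPIter hg (k+1)) _) m,
      pdLastIter_add (sm_cf_mul (sm_mul (Sm.cf j) (sm_lapPIter hg (k+2))) j)
        (sm_constMul (sm_cf_mul ((sm_lapPIter hg (k+1)).pd j) j) _) m,
      pdLastIter_cf_mul hn (sm_mul (Sm.cf j) (sm_lapPIter hg (k+2))) hj m,
      pdLastIter_const_mul (sm_cf_mul ((sm_lapPIter hg (k+1)).pd j) j) _ m,
      pdLastIter_cf_mul hn ((sm_lapPIter hg (k+1)).pd j) hj m,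
      pdLastIter_const_mul (sm_lapPIter hg (k+1)) _ m,
      pdLastIter_const_mul (sm_lapPIter (Sm.pd (hg.pd j) j) k) _ m]
    simp only [cf_zero, zero_mul, mul_zero, zero_add, add_zero]
    push_cast
    ring

noncomputable def gegenCoeff (α : ℂ) (l k : ℕ) : ℂ :=
  (-1 : ℂ) ^ k * (∏ m ∈ Finset.Ico ((l + 1) / 2) (l - k), (α + (m : ℂ))) *
    2 ^ (l - 2 * k) / ((Nat.factorial k : ℂ) * (Nat.factorial (l - 2 * k) : ℂ))

noncomputable def Kact (n : ℕ) (lam : ℂ) (l : ℤ) (φ : (Fin n → ℝ) → ℂ) : ℂ :=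
  if 0 ≤ l then
    ∑ k ∈ Finset.range (l.toNat / 2 + 1),
      gegenCoeff (lam - ((n : ℂ) - 1) / 2) l.toNat k *
        ((-1 : ℂ) ^ k * ((-1 : ℂ) ^ (l.toNat - 2 * k) *
          (pdLast (n := n))^[l.toNat - 2 * k] ((lapP (n := n))^[k] φ) 0))
  else 0

noncomputable def gam (mu : ℂ) (a : ℕ) : ℂ := if a % 2 = 1 then 1 else mu + ((a / 2 : ℕ) : ℂ)

def epsSet {n : ℕ} (I : Finset (Fin n)) (k : Fin n) : ℝ := if k ∈ I then 1 else -1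

lemma S_eq (hn : 0 < n) :
    Finset.univ.filter (fun j : Fin n => (j : ℕ) < n - 1)
      = Finset.univ.erase ⟨n - 1, by omega⟩ := by
  ext j
  simp only [Finset.mem_filter, Finset.mem_erase, Finset.mem_univ, true_and, and_true,
    Fin.ext_iff]
  have := j.isLt
  have hv : ((⟨n - 1, by omega⟩ : Fin n) : ℕ) = n - 1 := rfl
  omega

lemma card_S (hn : 0 < n) :
    (Finset.univ.filter (fun j : Fin n => (j : ℕ) < n - 1)).card = n - 1 := by
  rw [S_eq hn, Finset.card_erase_of_mem (Finset.mem_univ _), Finset.card_univ,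
    Fintype.card_fin]

lemma eps_cast {I : Finset (Fin n)} (j : Fin n) :
    ((epsSet I j : ℝ) : ℂ) = 2 * (if j ∈ I then (1 : ℂ) else 0) - 1 := by
  unfold epsSet
  split <;> norm_num

lemma sum_eps (hn : 0 < n) {I : Finset (Fin n)} (hIsub : ∀ k ∈ I, (k : ℕ) < n - 1) :
    ∑ j ∈ Finset.univ.filter (fun j : Fin n => (j : ℕ) < n - 1), ((epsSet I j : ℝ) : ℂ)
      = 2 * (I.card : ℂ) - ((n : ℂ) - 1) := by
  have hIS : I ⊆ Finset.univ.filter (fun j : Fin n => (j : ℕ) < n - 1) := by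
    intro j hj
    simp only [Finset.mem_filter, Finset.mem_univ, true_and]
    exact hIsub j hj
  simp only [eps_cast]
  rw [Finset.sum_sub_distrib, Finset.sum_const, ← Finset.mul_sum, Finset.sum_ite_mem,
    Finset.inter_eq_right.mpr hIS, Finset.sum_const, card_S hn]
  have h2 : (1:ℕ) ≤ n := hn
  simp only [nsmul_eq_mul, mul_one]
  push_cast [h2]
  ring

lemma sum_eps_mul (hn : 0 < n) {I : Finset (Fin n)} (hIsub : ∀ k ∈ I, (k : ℕ) < n - 1)
    (D : Fin n → ℂ) :
    ∑ j ∈ Finset.univ.filter (fun j : Fin n => (j : ℕ) < n - 1), ((epsSet I j : ℝ) : ℂ) * D j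
      = 2 * ∑ j ∈ I, D j
        - ∑ j ∈ Finset.univ.filter (fun j : Fin n => (j : ℕ) < n - 1), D j := by
  have hIS : I ⊆ Finset.univ.filter (fun j : Fin n => (j : ℕ) < n - 1) := by
    intro j hj
    simp only [Finset.mem_filter, Finset.mem_univ, true_and]
    exact hIsub j hj
  simp only [eps_cast, sub_mul, mul_assoc, ite_mul, one_mul, zero_mul]
  rw [Finset.sum_sub_distrib, ← Finset.mul_sum, Finset.sum_ite_mem,
    Finset.inter_eq_right.mpr hIS]

lemma master (hn : 2 ≤ n) {φ : (Fin n → ℝ) → ℂ} (hφ : Sm φ) {I : Finset (Fin n)}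
    (hIsub : ∀ j ∈ I, (j : ℕ) < n - 1) (k m : ℕ) :
    pdLast^[m] (lapP^[k] (fun x => cf ⟨n - 1, by omega⟩ x * (cf ⟨n - 1, by omega⟩ x * φ x)
        - ∑ j ∈ Finset.univ.filter (fun j : Fin n => (j : ℕ) < n - 1),
            ((epsSet I j : ℝ) : ℂ) * (cf j x * (cf j x * φ x)))) 0
      = ((m * (m - 1) : ℕ) : ℂ) * pdLast^[m - 2] (lapP^[k] φ) 0
        + (((4 * k * (k - 1) + 2 * k * (n - 1) : ℕ) : ℂ) - ((4 * k * I.card : ℕ) : ℂ))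
            * pdLast^[m] (lapP^[k - 1] φ) 0
        - ((8 * k * (k - 1) : ℕ) : ℂ)
            * pdLast^[m] (lapP^[k - 2] (fun x => ∑ j ∈ I, pd j (pd j φ) x)) 0 := by
  have hn0 : 0 < n := by omega
  have hA : Sm (fun x => cf (⟨n - 1, by omega⟩ : Fin n) x * (cf ⟨n - 1, by omega⟩ x * φ x)) :=
    sm_cf_mul (sm_cf_mul hφ _) _
  have hG : ∀ j ∈ Finset.univ.filter (fun j : Fin n => (j : ℕ) < n - 1),
      Sm (fun x => ((epsSet I j : ℝ) : ℂ) * (cf j x * (cf j x * φ x))) :=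
    fun j _ => sm_constMul (sm_cf_mul (sm_cf_mul hφ j) j) _
  have hB : Sm (fun x => ∑ j ∈ Finset.univ.filter (fun j : Fin n => (j : ℕ) < n - 1),
      ((epsSet I j : ℝ) : ℂ) * (cf j x * (cf j x * φ x))) := sm_sum _ hG
  have e1 : pdLast^[m] (lapP^[k] (fun x => cf (⟨n - 1, by omega⟩ : Fin n) x
        * (cf ⟨n - 1, by omega⟩ x * φ x)
        - ∑ j ∈ Finset.univ.filter (fun j : Fin n => (j : ℕ) < n - 1),
            ((epsSet I j : ℝ) : ℂ) * (cf j x * (cf j x * φ x)))) 0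
      = pdLast^[m] (lapP^[k] (fun x => cf (⟨n - 1, by omega⟩ : Fin n) x
            * (cf ⟨n - 1, by omega⟩ x * φ x))) 0
        - pdLast^[m] (lapP^[k] (fun x =>
            ∑ j ∈ Finset.univ.filter (fun j : Fin n => (j : ℕ) < n - 1),
              ((epsSet I j : ℝ) : ℂ) * (cf j x * (cf j x * φ x)))) 0 := by
    rw [lapPIter_sub hA hB k, pdLastIter_sub (sm_lapPIter hA k) (sm_lapPIter hB k) m]
  have e2 : pdLast^[m] (lapP^[k] (fun x =>
        ∑ j ∈ Finset.univ.filter (fun j : Fin n => (j : ℕ) < n - 1),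
          ((epsSet I j : ℝ) : ℂ) * (cf j x * (cf j x * φ x)))) 0
      = ∑ j ∈ Finset.univ.filter (fun j : Fin n => (j : ℕ) < n - 1),
          ((epsSet I j : ℝ) : ℂ) * (((2 * k : ℕ) : ℂ) * pdLast^[m] (lapP^[k - 1] φ) 0
            + ((4 * k * (k - 1) : ℕ) : ℂ)
                * pdLast^[m] (lapP^[k - 2] (pd j (pd j φ))) 0) := by
    rw [lapPIter_sum _ hG k, pdLastIter_sum _ (fun j hj => sm_lapPIter (hG j hj) k) m]
    beta_reduce
    apply Finset.sum_congr rfl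
    intro j hj
    have hjlt : (j : ℕ) < n - 1 := (Finset.mem_filter.mp hj).2
    rw [lapPIter_const_mul (sm_cf_mul (sm_cf_mul hφ j) j) _ k,
      pdLastIter_const_mul (sm_lapPIter (sm_cf_mul (sm_cf_mul hφ j) j) k) _ m]
    beta_reduce
    rw [Aeval hn0 hjlt hφ k m]
  have e3 : ∑ j ∈ Finset.univ.filter (fun j : Fin n => (j : ℕ) < n - 1),
        ((epsSet I j : ℝ) : ℂ) * (((2 * k : ℕ) : ℂ) * pdLast^[m] (lapP^[k - 1] φ) 0
          + ((4 * k * (k - 1) : ℕ) : ℂ) * pdLast^[m] (lapP^[k - 2] (pd j (pd j φ))) 0)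
      = (2 * (I.card : ℂ) - ((n : ℂ) - 1))
          * (((2 * k : ℕ) : ℂ) * pdLast^[m] (lapP^[k - 1] φ) 0)
        + ((4 * k * (k - 1) : ℕ) : ℂ)
          * (2 * (∑ j ∈ I, pdLast^[m] (lapP^[k - 2] (pd j (pd j φ))) 0)
            - ∑ j ∈ Finset.univ.filter (fun j : Fin n => (j : ℕ) < n - 1),
                pdLast^[m] (lapP^[k - 2] (pd j (pd j φ))) 0) := by
    have expand : ∀ j ∈ Finset.univ.filter (fun j : Fin n => (j : ℕ) < n - 1),
        ((epsSet I j : ℝ) : ℂ) * (((2 * k : ℕ) : ℂ) * pdLast^[m] (lapP^[k - 1] φ) 0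
          + ((4 * k * (k - 1) : ℕ) : ℂ) * pdLast^[m] (lapP^[k - 2] (pd j (pd j φ))) 0)
        = ((epsSet I j : ℝ) : ℂ) * (((2 * k : ℕ) : ℂ) * pdLast^[m] (lapP^[k - 1] φ) 0)
          + ((4 * k * (k - 1) : ℕ) : ℂ)
            * (((epsSet I j : ℝ) : ℂ) * pdLast^[m] (lapP^[k - 2] (pd j (pd j φ))) 0) := by
      intro j _; ring
    rw [Finset.sum_congr rfl expand, Finset.sum_add_distrib, ← Finset.sum_mul,
      ← Finset.mul_sum, sum_eps hn0 hIsub,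
      sum_eps_mul hn0 hIsub (fun j => pdLast^[m] (lapP^[k - 2] (pd j (pd j φ))) 0)]
  have e4 : ∑ j ∈ I, pdLast^[m] (lapP^[k - 2] (pd j (pd j φ))) 0
      = pdLast^[m] (lapP^[k - 2] (fun x => ∑ j ∈ I, pd j (pd j φ) x)) 0 := by
    rw [lapPIter_sum I (fun j _ => Sm.pd (hφ.pd j) j) (k - 2),
      pdLastIter_sum I (fun j _ => sm_lapPIter (Sm.pd (hφ.pd j) j) (k - 2)) m]
  rw [e1, Beval hn0 hφ k m, e2, e3, e4]
  have hswapS : ((4 * k * (k - 1) : ℕ) : ℂ)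
        * (∑ j ∈ Finset.univ.filter (fun j : Fin n => (j : ℕ) < n - 1),
            pdLast^[m] (lapP^[k - 2] (pd j (pd j φ))) 0)
      = ((4 * k * (k - 1) : ℕ) : ℂ) * pdLast^[m] (lapP^[k - 1] φ) 0 := by
    rcases k with _ | _ | k
    · norm_num
    · norm_num
    · congr 1
      have swap : ∑ j ∈ Finset.univ.filter (fun j : Fin n => (j : ℕ) < n - 1),
            pdLast^[m] (lapP^[k + 2 - 2] (pd j (pd j φ))) 0
          = pdLast^[m] (lapP^[k + 2 - 2] (fun x =>
              ∑ j ∈ Finset.univ.filter (fun j : Fin n => (j : ℕ) < n - 1),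
                pd j (pd j φ) x)) 0 := by
        rw [lapPIter_sum _ (fun j _ => Sm.pd (hφ.pd j) j) (k + 2 - 2),
          pdLastIter_sum _ (fun j _ => sm_lapPIter (Sm.pd (hφ.pd j) j) (k + 2 - 2)) m]
      rw [swap, show k + 2 - 2 = k from by omega, show k + 2 - 1 = k + 1 from by omega,
        show lapP^[k + 1] φ = lapP^[k] (lapP φ) from Function.iterate_succ_apply _ _ _]
      rfl
  have hcard : (1 : ℕ) ≤ n := by omega
  rcases k with _ | _ | k
  · norm_num
  · rw [show (1 : ℕ) - 1 = 0 from rfl]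
    norm_num
    push_cast [hcard]
    ring
  · replace hswapS := hswapS
    rw [show k + 2 - 1 = k + 1 from by omega, show k + 2 - 2 = k from by omega] at hswapS ⊢
    push_cast [hcard] at hswapS ⊢
    linear_combination hswapS

lemma prod_shift (α : ℂ) (a b : ℕ) :
    (∏ m ∈ Finset.Ico (a + 1) (b + 1), (α - 1 + (m : ℂ)))
      = ∏ m ∈ Finset.Ico a b, (α + (m : ℂ)) := by
  rw [Finset.prod_Ico_eq_prod_range, Finset.prod_Ico_eq_prod_range,
    show b + 1 - (a + 1) = b - a from by omega]
  apply Finset.prod_congr rfl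
  intro i _
  push_cast
  ring

lemma gegen_G1 (α : ℂ) (L k : ℕ) (hk : k ≤ L / 2) :
    ((k : ℂ) + 1) * gegenCoeff (α - 1) (L + 2) (k + 1) = - gegenCoeff α L k := by
  unfold gegenCoeff
  rw [show (L + 2 + 1) / 2 = (L + 1) / 2 + 1 from by omega,
    show L + 2 - (k + 1) = (L - k) + 1 from by omega,
    show L + 2 - 2 * (k + 1) = L - 2 * k from by omega,
    prod_shift α ((L + 1) / 2) (L - k),
    Nat.factorial_succ k]
  have h1 : ((Nat.factorial k : ℂ)) ≠ 0 := Nat.cast_ne_zero.mpr (Nat.factorial_ne_zero k)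
  have h2 : ((Nat.factorial (L - 2 * k) : ℂ)) ≠ 0 :=
    Nat.cast_ne_zero.mpr (Nat.factorial_ne_zero _)
  have h3 : ((k : ℂ) + 1) ≠ 0 := by
    have h := Nat.cast_ne_zero (R := ℂ).mpr (Nat.succ_ne_zero k)
    push_cast at h
    exact h
  field_simp
  push_cast
  ring

lemma gegen_G2 (α : ℂ) (L k : ℕ) (hk : k ≤ L / 2) :
    gegenCoeff (α - 1) (L + 2) k * (((L + 2 - 2 * k) * (L + 1 - 2 * k) : ℕ) : ℂ)
      = 4 * (α + (L : ℂ) - (k : ℂ)) * gegenCoeff α L k := by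
  unfold gegenCoeff
  rw [show (L + 2 + 1) / 2 = (L + 1) / 2 + 1 from by omega,
    show L + 2 - k = ((L - k) + 1) + 1 from by omega,
    prod_shift α ((L + 1) / 2) ((L - k) + 1),
    Finset.prod_Ico_succ_top (show (L + 1) / 2 ≤ L - k from by omega),
    show L + 2 - 2 * k = (L - 2 * k) + 2 from by omega,
    show L + 1 - 2 * k = (L - 2 * k) + 1 from by omega,
    Nat.factorial_succ ((L - 2 * k) + 1), Nat.factorial_succ (L - 2 * k)]
  have h1 : ((Nat.factorial k : ℂ)) ≠ 0 := Nat.cast_ne_zero.mpr (Nat.factorial_ne_zero k)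
  have h2 : ((Nat.factorial (L - 2 * k) : ℂ)) ≠ 0 :=
    Nat.cast_ne_zero.mpr (Nat.factorial_ne_zero _)
  have h4 : ((L - 2 * k : ℕ) : ℂ) + 2 ≠ 0 := by
    have h := Nat.cast_ne_zero (R := ℂ).mpr (show (L - 2 * k) + 2 ≠ 0 from by omega)
    push_cast at h
    exact h
  have h5 : ((L - 2 * k : ℕ) : ℂ) + 1 ≠ 0 := by
    have h := Nat.cast_ne_zero (R := ℂ).mpr (show (L - 2 * k) + 1 ≠ 0 from by omega)
    push_cast at h
    exact h
  have h6 : ((L - 2 * k : ℕ) : ℂ) + 1 + 1 ≠ 0 := by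
    have h := h4
    rwa [show ((L - 2 * k : ℕ) : ℂ) + 2 = ((L - 2 * k : ℕ) : ℂ) + 1 + 1 from by ring] at h
  have hkL : k ≤ L := by omega
  push_cast [Nat.cast_sub hkL]
  field_simp
  ring

lemma neg_pow_sub (a k : ℕ) (h : 2 * k ≤ a) : (-1 : ℂ) ^ (a - 2 * k) = (-1) ^ a := by
  conv_rhs => rw [show a = (a - 2 * k) + 2 * k from by omega, pow_add, pow_mul]
  norm_num

/-- For I ⊆ {1,…,n−1} with #I = i:
`(x_n² − Σ_{k=1}^{n−1} ε_I(k) x_k²)·𝒦_{λ−1,ν+1} = 4(ν − i)·𝒦_{λ,ν} − 8(Σ_{k∈I} ∂_k²)𝒦_{λ+1,ν−1}`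
as tempered distributions on ℝ^n, tested against an arbitrary Schwartz function `φ`;
`((Σ_{k∈I} ∂_k²) T)(φ) = T(Σ_{k∈I} ∂_k² φ)`. -/
theorem stmt17 (n : ℕ) (hn : 2 ≤ n) (lam nu : ℂ) (l : ℤ) (hl : 0 ≤ l)
    (hln : nu - lam = (l : ℂ)) (i : ℕ) (I : Finset (Fin n))
    (hIsub : ∀ k ∈ I, (k : ℕ) < n - 1) (hI : I.card = i)
    (φ : SchwartzMap (Fin n → ℝ) ℂ) :
    Kact n (lam - 1) (l + 2)
        (fun x => (((x ⟨n - 1, by omega⟩) ^ 2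
          - ∑ k ∈ Finset.univ.filter (fun k : Fin n => (k : ℕ) < n - 1),
              epsSet I k * (x k) ^ 2 : ℝ) : ℂ) * φ x)
      = 4 * (nu - (i : ℂ)) * Kact n lam l ⇑φ
        - 8 * Kact n (lam + 1) (l - 2) (fun y => ∑ k ∈ I, pd k (pd k ⇑φ) y) := by
  subst hI
  have hn0 : 0 < n := by omega
  have hn1 : (1 : ℕ) ≤ n := by omega
  have hφsm : Sm ⇑φ := φ.smooth ⊤
  have hΦ : (fun x => (((x ⟨n - 1, by omega⟩) ^ 2
          - ∑ k ∈ Finset.univ.filter (fun k : Fin n => (k : ℕ) < n - 1),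
              epsSet I k * (x k) ^ 2 : ℝ) : ℂ) * φ x)
      = (fun x => cf (⟨n - 1, by omega⟩ : Fin n) x * (cf ⟨n - 1, by omega⟩ x * φ x)
          - ∑ j ∈ Finset.univ.filter (fun j : Fin n => (j : ℕ) < n - 1),
              ((epsSet I j : ℝ) : ℂ) * (cf j x * (cf j x * φ x))) := by
    funext x
    push_cast
    simp only [cf]
    rw [sub_mul, Finset.sum_mul]
    congr 1
    · ring
    · apply Finset.sum_congr rfl
      intro j _
      ring
  rw [hΦ]
  rw [Kact, if_pos (show (0:ℤ) ≤ l + 2 from by omega), Kact, if_pos hl]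
  rw [show (l + 2).toNat = l.toNat + 2 from by omega,
    show (l.toNat + 2) / 2 + 1 = l.toNat / 2 + 2 from by omega,
    show lam - 1 - ((n:ℂ) - 1) / 2 = (lam - ((n : ℂ) - 1) / 2) - 1 from by ring]
  have hLHS : (∑ k ∈ Finset.range (l.toNat / 2 + 2),
        gegenCoeff ((lam - ((n : ℂ) - 1) / 2) - 1) (l.toNat + 2) k *
          ((-1 : ℂ) ^ k * ((-1 : ℂ) ^ (l.toNat + 2 - 2 * k) *
            pdLast^[l.toNat + 2 - 2 * k] (lapP^[k] (fun x => cf (⟨n - 1, by omega⟩ : Fin n) x * (cf ⟨n - 1, by omega⟩ x * φ x)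
          - ∑ j ∈ Finset.univ.filter (fun j : Fin n => (j : ℕ) < n - 1),
              ((epsSet I j : ℝ) : ℂ) * (cf j x * (cf j x * φ x)))) 0)))
      = ∑ k ∈ Finset.range (l.toNat / 2 + 2),
          ((-1 : ℂ) ^ l.toNat * ((-1 : ℂ) ^ (k) * (gegenCoeff ((lam - ((n : ℂ) - 1) / 2) - 1) (l.toNat + 2) (k) * ((((l.toNat + 2 - 2 * (k)) * (l.toNat + 2 - 2 * (k) - 1) : ℕ) : ℂ) * pdLast^[l.toNat + 2 - 2 * (k) - 2] (lapP^[(k)] ⇑φ) 0))) + (-1 : ℂ) ^ l.toNat * ((-1 : ℂ) ^ (k) * (gegenCoeff ((lam - ((n : ℂ) - 1) / 2) - 1) (l.toNat + 2) (k) * (((((4 * (k) * ((k) - 1) + 2 * (k) * (n - 1) : ℕ)) : ℂ) - ((4 * (k) * I.card : ℕ) : ℂ)) * pdLast^[l.toNat + 2 - 2 * (k)] (lapP^[(k) - 1] ⇑φ) 0))) - (-1 : ℂ) ^ l.toNat * ((-1 : ℂ) ^ (k) * (gegenCoeff ((lam - ((n : ℂ) - 1) / 2) - 1) (l.toNat +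 2) (k) * (((8 * (k) * ((k) - 1) : ℕ) : ℂ) * pdLast^[l.toNat + 2 - 2 * (k)] (lapP^[(k) - 2] (fun y => ∑ k ∈ I, pd k (pd k ⇑φ) y)) 0)))) := by
    apply Finset.sum_congr rfl
    intro k hk
    simp only [Finset.mem_range] at hk
    rw [master hn hφsm hIsub k (l.toNat + 2 - 2 * k)]
    rw [show (-1 : ℂ) ^ (l.toNat + 2 - 2 * k) = (-1 : ℂ) ^ l.toNat from by
      rw [neg_pow_sub (l.toNat + 2) k (by omega), pow_add]; norm_num]
    ring
  rw [hLHS, Finset.sum_sub_distrib, Finset.sum_add_distrib]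
  have hA1 : (∑ k ∈ Finset.range (l.toNat / 2 + 2), (-1 : ℂ) ^ l.toNat * ((-1 : ℂ) ^ (k) * (gegenCoeff ((lam - ((n : ℂ) - 1) / 2) - 1) (l.toNat + 2) (k) * ((((l.toNat + 2 - 2 * (k)) * (l.toNat + 2 - 2 * (k) - 1) : ℕ) : ℂ) * pdLast^[l.toNat + 2 - 2 * (k) - 2] (lapP^[(k)] ⇑φ) 0))))
      = ∑ k ∈ Finset.range (l.toNat / 2 + 1), (-1 : ℂ) ^ l.toNat * ((-1 : ℂ) ^ k * (gegenCoeff ((lam - ((n : ℂ) - 1) / 2) - 1) (l.toNat + 2) k * ((((l.toNat + 2 - 2 * k) * (l.toNat + 1 - 2 * k) : ℕ) : ℂ) * pdLast^[l.toNat - 2 * k] (lapP^[k] ⇑φ) 0))) := by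
    rw [show l.toNat / 2 + 2 = (l.toNat / 2 + 1) + 1 from rfl, Finset.sum_range_succ,
      show ((l.toNat + 2 - 2 * (l.toNat / 2 + 1)) *
        (l.toNat + 2 - 2 * (l.toNat / 2 + 1) - 1) : ℕ) = 0 from
          Nat.mul_eq_zero.mpr (by omega)]
    norm_num
    apply Finset.sum_congr rfl
    intro k hk
    simp only [Finset.mem_range] at hk
    rw [show l.toNat + 2 - 2 * k - 2 = l.toNat - 2 * k from by omega,
      show l.toNat + 2 - 2 * k - 1 = l.toNat + 1 - 2 * k from by omega]
  have hA2 : (∑ k ∈ Finset.range (l.toNat / 2 + 2), (-1 : ℂ) ^ l.toNat * ((-1 : ℂ) ^ (k) * (gegenCoeff ((lam - ((n : ℂ) - 1) / 2) - 1) (l.toNat + 2) (k) * (((((4 * (k) * ((k) - 1) + 2 * (k) * (n - 1) : ℕ)) : ℂ) - ((4 * (k) * I.card : ℕ) : ℂ)) * pdLast^[l.toNat + 2 - 2 * (k)] (lapP^[(k) - 1] ⇑φ) 0))))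
      = ∑ k ∈ Finset.range (l.toNat / 2 + 1), (-1 : ℂ) ^ l.toNat * ((-1 : ℂ) ^ (k + 1) * (gegenCoeff ((lam - ((n : ℂ) - 1) / 2) - 1) (l.toNat + 2) (k + 1) * (((((4 * (k + 1) * k + 2 * (k + 1) * (n - 1) : ℕ)) : ℂ) - ((4 * (k + 1) * I.card : ℕ) : ℂ)) * pdLast^[l.toNat - 2 * k] (lapP^[k] ⇑φ) 0))) := by
    rw [show l.toNat / 2 + 2 = (l.toNat / 2 + 1) + 1 from rfl, Finset.sum_range_succ']
    norm_num
    apply Finset.sum_congr rfl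
    intro k hk
    simp only [Finset.mem_range] at hk
    rw [show l.toNat + 2 - 2 * (k + 1) = l.toNat - 2 * k from by omega]
  have hA3 : (∑ k ∈ Finset.range (l.toNat / 2 + 2), (-1 : ℂ) ^ l.toNat * ((-1 : ℂ) ^ (k) * (gegenCoeff ((lam - ((n : ℂ) - 1) / 2) - 1) (l.toNat + 2) (k) * (((8 * (k) * ((k) - 1) : ℕ) : ℂ) * pdLast^[l.toNat + 2 - 2 * (k)] (lapP^[(k) - 2] (fun y => ∑ k ∈ I, pd k (pd k ⇑φ) y)) 0))))
      = ∑ k ∈ Finset.range (l.toNat / 2), (-1 : ℂ) ^ l.toNat * ((-1 : ℂ) ^ (k + 2) * (gegenCoeff ((lam - ((n : ℂ) - 1) / 2) - 1) (l.toNat + 2) (k + 2) * (((8 * (k + 2) * (k + 1) : ℕ) : ℂ) * pdLast^[l.toNat - 2 - 2 * k] (lapP^[k] (fun y => ∑ k ∈ I, pd k (pd k ⇑φ) y)) 0))) := by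
    rw [show l.toNat / 2 + 2 = (l.toNat / 2 + 1) + 1 from rfl, Finset.sum_range_succ',
      Finset.sum_range_succ']
    norm_num
    apply Finset.sum_congr rfl
    intro k hk
    simp only [Finset.mem_range] at hk
    rw [show l.toNat + 2 - 2 * (k + 1 + 1) = l.toNat - 2 - 2 * k from by omega,
      show (k + 1 + 1) - 2 = k from by omega,
      show k + 1 + 1 = k + 2 from by omega]
    push_cast
    ring
  rw [hA1, hA2, hA3]
  have hMid : (∑ k ∈ Finset.range (l.toNat / 2 + 1), (-1 : ℂ) ^ l.toNat * ((-1 : ℂ) ^ k * (gegenCoeff ((lam - ((n : ℂ) - 1) / 2) - 1) (l.toNat + 2) k * ((((l.toNat + 2 - 2 * k) * (l.toNat + 1 - 2 * k) : ℕ) : ℂ) * pdLast^[l.toNat - 2 * k] (lapP^[k] ⇑φ) 0))))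
        + (∑ k ∈ Finset.range (l.toNat / 2 + 1), (-1 : ℂ) ^ l.toNat * ((-1 : ℂ) ^ (k + 1) * (gegenCoeff ((lam - ((n : ℂ) - 1) / 2) - 1) (l.toNat + 2) (k + 1) * (((((4 * (k + 1) * k + 2 * (k + 1) * (n - 1) : ℕ)) : ℂ) - ((4 * (k + 1) * I.card : ℕ) : ℂ)) * pdLast^[l.toNat - 2 * k] (lapP^[k] ⇑φ) 0))))
      = 4 * (nu - (I.card : ℂ)) * ∑ k ∈ Finset.range (l.toNat / 2 + 1),
          gegenCoeff (lam - ((n : ℂ) - 1) / 2) l.toNat k *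
            ((-1 : ℂ) ^ k * ((-1 : ℂ) ^ (l.toNat - 2 * k) *
              pdLast^[l.toNat - 2 * k] (lapP^[k] ⇑φ) 0)) := by
    rw [Finset.mul_sum, ← Finset.sum_add_distrib]
    apply Finset.sum_congr rfl
    intro k hk
    simp only [Finset.mem_range] at hk
    have hk2 : 2 * k ≤ l.toNat := by omega
    rw [show (-1:ℂ) ^ (l.toNat - 2 * k) = (-1:ℂ) ^ l.toNat from neg_pow_sub _ _ hk2]
    have hlc : ((l.toNat : ℕ) : ℂ) = (l : ℂ) := by
      exact_mod_cast congrArg (fun z : ℤ => (z : ℂ)) (Int.toNat_of_nonneg hl)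
    have hG2 := gegen_G2 (lam - ((n : ℂ) - 1) / 2) l.toNat k (by omega)
    have hG1 := gegen_G1 (lam - ((n : ℂ) - 1) / 2) l.toNat k (by omega)
    push_cast [Nat.cast_sub (show 2 * k ≤ l.toNat + 2 from by omega),
      Nat.cast_sub (show 2 * k ≤ l.toNat + 1 from by omega),
      Nat.cast_sub hn1] at hG2 ⊢
    linear_combination ((-1:ℂ) ^ l.toNat * (-1:ℂ) ^ k * (pdLast^[l.toNat - 2 * k] (lapP^[k] ⇑φ) 0)) * hG2
      - ((-1:ℂ) ^ l.toNat * (-1:ℂ) ^ k * (pdLast^[l.toNat - 2 * k] (lapP^[k] ⇑φ) 0) *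
          (4 * (k:ℂ) + 2 * ((n:ℂ) - 1) - 4 * (I.card:ℂ))) * hG1
      - (4 * (-1:ℂ) ^ l.toNat * (-1:ℂ) ^ k * (pdLast^[l.toNat - 2 * k] (lapP^[k] ⇑φ) 0) *
          gegenCoeff (lam - ((n : ℂ) - 1) / 2) l.toNat k) * hln
      + (4 * (-1:ℂ) ^ l.toNat * (-1:ℂ) ^ k * (pdLast^[l.toNat - 2 * k] (lapP^[k] ⇑φ) 0) *
          gegenCoeff (lam - ((n : ℂ) - 1) / 2) l.toNat k) * hlc
  have hLast : (∑ k ∈ Finset.range (l.toNat / 2), (-1 : ℂ) ^ l.toNat * ((-1 : ℂ) ^ (k + 2) * (gegenCoeff ((lam - ((n : ℂ) - 1) / 2) - 1) (l.toNat + 2) (k + 2) * (((8 * (k + 2) * (k + 1) : ℕ) : ℂ) * pdLast^[l.toNat - 2 - 2 * k] (lapP^[k] (fun y => ∑ k ∈ I, pd k (pd k ⇑φ) y)) 0))))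
      = 8 * Kact n (lam + 1) (l - 2) (fun y => ∑ k ∈ I, pd k (pd k ⇑φ) y) := by
    by_cases hl2 : 2 ≤ l
    · rw [Kact, if_pos (show (0:ℤ) ≤ l - 2 from by omega),
        show (l - 2).toNat = l.toNat - 2 from by omega,
        show (l.toNat - 2) / 2 + 1 = l.toNat / 2 from by omega,
        show lam + 1 - ((n:ℂ) - 1) / 2 = (lam - ((n : ℂ) - 1) / 2) + 1 from by ring,
        Finset.mul_sum]
      apply Finset.sum_congr rfl
      intro k hk
      simp only [Finset.mem_range] at hk
      have hkL : 2 * k ≤ l.toNat - 2 := by omega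
      rw [show (-1:ℂ) ^ (l.toNat - 2 - 2 * k) = (-1:ℂ) ^ l.toNat from by
        rw [neg_pow_sub (l.toNat - 2) k hkL,
          show l.toNat = (l.toNat - 2) + 2 from by omega, pow_add]
        norm_num]
      have hG1a := gegen_G1 (lam - ((n : ℂ) - 1) / 2) l.toNat (k + 1) (by omega)
      have hG1b := gegen_G1 ((lam - ((n : ℂ) - 1) / 2) + 1) (l.toNat - 2) k (by omega)
      rw [show (lam - ((n : ℂ) - 1) / 2) + 1 - 1 = (lam - ((n : ℂ) - 1) / 2) from by ring,
        show l.toNat - 2 + 2 = l.toNat from by omega] at hG1b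
      push_cast at hG1a hG1b ⊢
      linear_combination (8 * (-1:ℂ) ^ l.toNat * (-1:ℂ) ^ k * (pdLast^[l.toNat - 2 - 2 * k] (lapP^[k] (fun y => ∑ k ∈ I, pd k (pd k ⇑φ) y)) 0) * ((k:ℂ) + 1)) * hG1a
        - (8 * (-1:ℂ) ^ l.toNat * (-1:ℂ) ^ k * (pdLast^[l.toNat - 2 - 2 * k] (lapP^[k] (fun y => ∑ k ∈ I, pd k (pd k ⇑φ) y)) 0)) * hG1b
    · rw [Kact, if_neg (show ¬ (0:ℤ) ≤ l - 2 from by omega), mul_zero,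
        show l.toNat / 2 = 0 from by omega, Finset.range_zero, Finset.sum_empty]
  linear_combination hMid - hLast
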